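/- Let n ≥ 1 and let ψ ∈ ℂ^{2^n} be a unit vector. Then ψ satisfies the parity superselection rule if and only if the pure state it generates is even, i.e., if and only if for every odd-length list of matrices, each factor being aₛ or aₛ† for some 1 ≤ s ≤ n, the inner product ⟨ψ, M ψ⟩ of ψ with the product M of the list applied to ψ equals 0. -/

import Mathlib

open Matrix Polynomial

/-- Binary strings of length `n`, indexing the `2^n`-dimensional Fock space. -/
abbrev Idx (n : ℕ) := Fin n → Fin 2

/-- Jordan–Wigner creation matrix `aₜ†` for mode `t`:
`aₜ†|j₁…jₙ⟩ = (−1)^{j₁+⋯+j_{t−1}} |j₁…j_{t−1} 1 j_{t+1}…jₙ⟩` if `jₜ = 0`, and `0` if `jₜ = 1`. -/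
noncomputable def adag (n : ℕ) (t : Fin n) : Matrix (Idx n) (Idx n) ℂ :=
  Matrix.of fun J K =>
    if K t = 0 ∧ J = Function.update K t 1
    then (-1 : ℂ) ^ (∑ s ∈ Finset.univ.filter (fun s => s < t), (K s : ℕ))
    else 0

/-- Jordan–Wigner annihilation matrix `aₜ`, the conjugate transpose of `aₜ†`. -/
noncomputable def ann (n : ℕ) (t : Fin n) : Matrix (Idx n) (Idx n) ℂ := (adag n t)ᴴ

/-- A vector `ψ` satisfies the parity superselection rule if the particle numbers
`j₁+⋯+jₙ` have the same parity for all `J` with `⟨J|ψ⟩ ≠ 0`. -/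
def PSSR {n : ℕ} (ψ : Idx n → ℂ) : Prop :=
  (∀ J, ψ J ≠ 0 → Even (∑ s, (J s : ℕ))) ∨ (∀ J, ψ J ≠ 0 → Odd (∑ s, (J s : ℕ)))

lemma fin2cases (x : Fin 2) : x = 0 ∨ x = 1 := by
  fin_cases x <;> simp

-- ann entry
lemma ann_apply (n : ℕ) (t : Fin n) (J K : Idx n) :
    ann n t J K = if J t = 0 ∧ K = Function.update J t 1
    then (-1 : ℂ) ^ (∑ s ∈ Finset.univ.filter (fun s => s < t), (J s : ℕ))
    else 0 := by
  simp only [ann, conjTranspose_apply, adag, of_apply]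
  split <;> simp [Complex.star_def, map_pow]

lemma adag_mulVec (n : ℕ) (t : Fin n) (K : Idx n) (h : K t = 0) :
    adag n t *ᵥ Pi.single K 1 =
      ((-1 : ℂ) ^ (∑ s ∈ Finset.univ.filter (fun s => s < t), (K s : ℕ))) •
        (Pi.single (Function.update K t 1) 1 : Idx n → ℂ) := by
  funext J
  simp only [mulVec_single_one, col_apply, mul_one, Pi.smul_apply, Pi.single_apply, adag, of_apply, h,
    true_and, smul_eq_mul]
  split <;> simp

lemma adag_mulVec_zero (n : ℕ) (t : Fin n) (K : Idx n) (h : K t ≠ 0) :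
    adag n t *ᵥ Pi.single K 1 = 0 := by
  funext J
  simp [mulVec_single_one, col_apply, adag, h]

lemma ann_mulVec (n : ℕ) (t : Fin n) (K : Idx n) (h : K t = 1) :
    ann n t *ᵥ Pi.single K 1 =
      ((-1 : ℂ) ^ (∑ s ∈ Finset.univ.filter (fun s => s < t), (K s : ℕ))) •
        (Pi.single (Function.update K t 0) 1 : Idx n → ℂ) := by
  funext J
  simp only [mulVec_single_one, col_apply, mul_one, Pi.smul_apply, Pi.single_apply, ann_apply, smul_eq_mul]
  by_cases hJ : J = Function.update K t 0
  · subst hJ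
    have h1 : K = Function.update (Function.update K t 0) t 1 := by
      funext s
      by_cases hs : s = t
      · subst hs; simp [h]
      · simp [Function.update_of_ne hs]
    rw [if_pos ⟨by simp, h1⟩, if_pos rfl, mul_one]
    congr 1
    apply Finset.sum_congr rfl
    intro s hs
    simp only [Finset.mem_filter] at hs
    rw [Function.update_of_ne (ne_of_lt hs.2)]
  · rw [if_neg hJ, mul_zero, if_neg]
    rintro ⟨hJt, hK⟩
    apply hJ
    funext s
    by_cases hs : s = t
    · subst hs; simp [hJt]
    · have := congrFun hK s
      rw [Function.update_of_ne hs] at this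
      rw [Function.update_of_ne hs, ← this]

lemma ann_mulVec_zero (n : ℕ) (t : Fin n) (K : Idx n) (h : K t ≠ 1) :
    ann n t *ᵥ Pi.single K 1 = 0 := by
  funext J
  simp only [mulVec_single_one, col_apply, mul_one, ann_apply, Pi.zero_apply]
  rw [if_neg]
  rintro ⟨hJt, hK⟩
  apply h
  rw [hK]
  simp

/-- The list of JW factors realizing `|J⟩⟨K|` (up to sign) at mode `t`. -/
noncomputable def jwFactor (n : ℕ) (J K : Idx n) (t : Fin n) :
    List (Matrix (Idx n) (Idx n) ℂ) :=
  if J t = K t then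
    (if K t = 1 then [adag n t, ann n t] else [ann n t, adag n t])
  else
    (if K t = 0 then [adag n t] else [ann n t])

lemma factor_mem (n : ℕ) (J K : Idx n) (t : Fin n) :
    ∀ M ∈ jwFactor n J K t, ∃ s : Fin n, M = ann n s ∨ M = adag n s := by
  intro M hM
  refine ⟨t, ?_⟩
  unfold jwFactor at hM
  split at hM <;> split at hM <;> simp only [List.mem_cons, List.mem_singleton,
    List.not_mem_nil, or_false] at hM <;> tauto

lemma factor_length_mod (n : ℕ) (J K : Idx n) (t : Fin n) :
    (jwFactor n J K t).length % 2 = ((J t : ℕ) + (K t : ℕ)) % 2 := by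
  rcases fin2cases (J t) with hJ | hJ <;> rcases fin2cases (K t) with hK | hK <;>
    simp [jwFactor, hJ, hK]

lemma factor_prod_mulVec (n : ℕ) (J K : Idx n) (t : Fin n) (L : Idx n) (hL : L t = K t) :
    ∃ σ : ℂ, σ ≠ 0 ∧ (jwFactor n J K t).prod *ᵥ Pi.single L 1 =
      σ • (Pi.single (Function.update L t (J t)) 1 : Idx n → ℂ) := by
  rcases fin2cases (J t) with hJ | hJ <;> rcases fin2cases (K t) with hK | hK
  · -- J t = 0, K t = 0 : [ann, adag]
    rw [hK] at hL
    refine ⟨(-1 : ℂ) ^ (∑ s ∈ Finset.univ.filter (fun s => s < t), (L s : ℕ)) *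
      (-1 : ℂ) ^ (∑ s ∈ Finset.univ.filter (fun s => s < t), ((Function.update L t 1) s : ℕ)),
      by simp, ?_⟩
    have e : jwFactor n J K t = [ann n t, adag n t] := by simp [jwFactor, hJ, hK]
    rw [e, List.prod_cons, List.prod_singleton, ← mulVec_mulVec,
      adag_mulVec n t L hL, mulVec_smul, ann_mulVec n t _ (by simp),
      Function.update_idem, hJ, smul_smul]
  · -- J t = 0, K t = 1 : [ann]
    rw [hK] at hL
    refine ⟨(-1 : ℂ) ^ (∑ s ∈ Finset.univ.filter (fun s => s < t), (L s : ℕ)), by simp, ?_⟩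
    have e : jwFactor n J K t = [ann n t] := by simp [jwFactor, hJ, hK]
    rw [e, List.prod_singleton, ann_mulVec n t L hL, hJ]
  · -- J t = 1, K t = 0 : [adag]
    rw [hK] at hL
    refine ⟨(-1 : ℂ) ^ (∑ s ∈ Finset.univ.filter (fun s => s < t), (L s : ℕ)), by simp, ?_⟩
    have e : jwFactor n J K t = [adag n t] := by simp [jwFactor, hJ, hK]
    rw [e, List.prod_singleton, adag_mulVec n t L hL, hJ]
  · -- J t = 1, K t = 1 : [adag, ann]
    rw [hK] at hL
    refine ⟨(-1 : ℂ) ^ (∑ s ∈ Finset.univ.filter (fun s => s < t), (L s : ℕ)) *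
      (-1 : ℂ) ^ (∑ s ∈ Finset.univ.filter (fun s => s < t), ((Function.update L t 0) s : ℕ)),
      by simp, ?_⟩
    have e : jwFactor n J K t = [adag n t, ann n t] := by simp [jwFactor, hJ, hK]
    rw [e, List.prod_cons, List.prod_singleton, ← mulVec_mulVec,
      ann_mulVec n t L hL, mulVec_smul, adag_mulVec n t _ (by simp),
      Function.update_idem, hJ, smul_smul]

lemma factor_prod_mulVec_zero (n : ℕ) (J K : Idx n) (t : Fin n) (L : Idx n) (hL : L t ≠ K t) :
    (jwFactor n J K t).prod *ᵥ Pi.single L 1 = 0 := by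
  rcases fin2cases (K t) with hK | hK
  · -- K t = 0 so L t = 1, rightmost jwFactor is adag
    have hL1 : L t ≠ 0 := by rw [hK] at hL; exact hL
    rcases fin2cases (J t) with hJ | hJ
    · have e : jwFactor n J K t = [ann n t, adag n t] := by simp [jwFactor, hJ, hK]
      rw [e, List.prod_cons, List.prod_singleton, ← mulVec_mulVec,
        adag_mulVec_zero n t L hL1, mulVec_zero]
    · have e : jwFactor n J K t = [adag n t] := by simp [jwFactor, hJ, hK]
      rw [e, List.prod_singleton, adag_mulVec_zero n t L hL1]
  · -- K t = 1 so L t = 0, rightmost jwFactor is ann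
    have hL1 : L t ≠ 1 := by rw [hK] at hL; exact hL
    rcases fin2cases (J t) with hJ | hJ
    · have e : jwFactor n J K t = [ann n t] := by simp [jwFactor, hJ, hK]
      rw [e, List.prod_singleton, ann_mulVec_zero n t L hL1]
    · have e : jwFactor n J K t = [adag n t, ann n t] := by simp [jwFactor, hJ, hK]
      rw [e, List.prod_cons, List.prod_singleton, ← mulVec_mulVec,
        ann_mulVec_zero n t L hL1, mulVec_zero]

lemma bind_prod_mulVec (n : ℕ) (J K : Idx n) :
    ∀ ts : List (Fin n), ts.Nodup → ∀ L : Idx n, (∀ t ∈ ts, L t = K t) →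
      ∃ σ : ℂ, σ ≠ 0 ∧ ((ts.flatMap (jwFactor n J K)).prod) *ᵥ Pi.single L 1 =
        σ • (Pi.single (fun s => if s ∈ ts then J s else L s) 1 : Idx n → ℂ) := by
  intro ts
  induction ts with
  | nil =>
    intro _ L _
    refine ⟨1, one_ne_zero, ?_⟩
    have : (fun s => if s ∈ ([] : List (Fin n)) then J s else L s) = L := by
      funext s; simp
    rw [this, List.flatMap_nil, List.prod_nil, one_mulVec, one_smul]
  | cons t ts ih =>
    intro hnd L hL
    have hnd' : ts.Nodup := hnd.of_cons
    have htn : t ∉ ts := by simp [List.nodup_cons] at hnd; exact hnd.1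
    obtain ⟨σ₁, hσ₁, h1⟩ := ih hnd' L (fun t' ht' => hL t' (List.mem_cons_of_mem _ ht'))
    set L' : Idx n := fun s => if s ∈ ts then J s else L s with hL'
    have hL't : L' t = K t := by
      simp only [hL', if_neg htn]
      exact hL t (List.mem_cons_self)
    obtain ⟨σ₂, hσ₂, h2⟩ := factor_prod_mulVec n J K t L' hL't
    refine ⟨σ₂ * σ₁, mul_ne_zero hσ₂ hσ₁, ?_⟩
    rw [List.flatMap_cons, List.prod_append, ← mulVec_mulVec, h1, mulVec_smul, h2,
      smul_smul, mul_comm σ₁]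
    have hupd : Function.update L' t (J t) = fun s => if s ∈ t :: ts then J s else L s := by
      funext s
      by_cases hs : s = t
      · subst hs
        simp [List.mem_cons]
      · rw [Function.update_of_ne hs]
        simp only [hL', List.mem_cons]
        by_cases hs' : s ∈ ts <;> simp [hs, hs']
    rw [hupd]

lemma bind_prod_mulVec_zero (n : ℕ) (J K : Idx n) :
    ∀ ts : List (Fin n), ts.Nodup → ∀ L : Idx n, (∃ t ∈ ts, L t ≠ K t) →
      ((ts.flatMap (jwFactor n J K)).prod) *ᵥ Pi.single L 1 = 0 := by
  intro ts
  induction ts with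
  | nil => rintro _ L ⟨t, ht, _⟩; simp at ht
  | cons t ts ih =>
    intro hnd L hbad
    have hnd' : ts.Nodup := hnd.of_cons
    have htn : t ∉ ts := by simp [List.nodup_cons] at hnd; exact hnd.1
    rw [List.flatMap_cons, List.prod_append, ← mulVec_mulVec]
    by_cases hin : ∃ t' ∈ ts, L t' ≠ K t'
    · rw [ih hnd' L hin, mulVec_zero]
    · push_neg at hin
      obtain ⟨σ₁, hσ₁, h1⟩ := bind_prod_mulVec n J K ts hnd' L hin
      have hLt : L t ≠ K t := by
        rcases hbad with ⟨t', ht', hne⟩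
        rcases List.mem_cons.mp ht' with rfl | h
        · exact hne
        · exact absurd (hin t' h) hne
      have hL't : (fun s => if s ∈ ts then J s else L s) t ≠ K t := by
        simpa [if_neg htn] using hLt
      rw [h1, mulVec_smul, factor_prod_mulVec_zero n J K t _ hL't, smul_zero]

lemma adag_ne_zero_sum (n : ℕ) (t : Fin n) (J K : Idx n) (h : adag n t J K ≠ 0) :
    ∑ s, (J s : ℕ) = ∑ s, (K s : ℕ) + 1 := by
  have h' : K t = 0 ∧ J = Function.update K t 1 := by
    by_contra hc
    simp [adag, hc] at h
  obtain ⟨hK0, hJ⟩ := h'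
  have hL : ∑ s, (J s : ℕ) = 1 + ∑ s ∈ Finset.univ.erase t, (K s : ℕ) := by
    rw [← Finset.add_sum_erase _ _ (Finset.mem_univ t)]
    congr 1
    · rw [hJ]; simp
    · apply Finset.sum_congr rfl
      intro s hs
      rw [hJ, Function.update_of_ne (Finset.ne_of_mem_erase hs)]
  have hR : ∑ s, (K s : ℕ) = ∑ s ∈ Finset.univ.erase t, (K s : ℕ) := by
    rw [← Finset.add_sum_erase _ _ (Finset.mem_univ t), hK0]
    simp
  omega

lemma step_parity (n : ℕ) (M : Matrix (Idx n) (Idx n) ℂ)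
    (hM : ∃ s : Fin n, M = ann n s ∨ M = adag n s) (J K : Idx n) (h : M J K ≠ 0) :
    ∑ s, (J s : ℕ) = ∑ s, (K s : ℕ) + 1 ∨ ∑ s, (K s : ℕ) = ∑ s, (J s : ℕ) + 1 := by
  obtain ⟨t, hM | hM⟩ := hM
  · subst hM
    right
    apply adag_ne_zero_sum n t K J
    intro hc
    rw [ann, conjTranspose_apply, hc] at h
    simp at h
  · subst hM
    left
    exact adag_ne_zero_sum n t J K h

lemma prod_parity (n : ℕ) :
    ∀ L : List (Matrix (Idx n) (Idx n) ℂ),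
      (∀ M ∈ L, ∃ s : Fin n, M = ann n s ∨ M = adag n s) →
      ∀ J K : Idx n, L.prod J K ≠ 0 →
        (∑ s, (J s : ℕ) + ∑ s, (K s : ℕ) + L.length) % 2 = 0 := by
  intro L
  induction L with
  | nil =>
    intro _ J K h
    rw [List.prod_nil] at h
    have : J = K := by
      by_contra hc
      rw [Matrix.one_apply_ne hc] at h
      exact h rfl
    subst this
    simp [Nat.add_mod_right]
    omega
  | cons M L ih =>
    intro hmem J K h
    rw [List.prod_cons, Matrix.mul_apply] at h
    obtain ⟨R, _, hR⟩ := Finset.exists_ne_zero_of_sum_ne_zero h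
    have h1 : M J R ≠ 0 := left_ne_zero_of_mul hR
    have h2 : L.prod R K ≠ 0 := right_ne_zero_of_mul hR
    have hs := step_parity n M (hmem M (List.mem_cons_self)) J R h1
    have hp := ih (fun M' hM' => hmem M' (List.mem_cons_of_mem _ hM')) R K h2
    simp only [List.length_cons]
    omega

lemma flatMap_length_mod (n : ℕ) (J K : Idx n) :
    ∀ ts : List (Fin n),
      (ts.flatMap (jwFactor n J K)).length % 2
        = (ts.map (fun t => (J t : ℕ) + (K t : ℕ))).sum % 2 := by
  intro ts
  induction ts with
  | nil => simp
  | cons t ts ih =>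
    rw [List.flatMap_cons, List.length_append, List.map_cons, List.sum_cons]
    have := factor_length_mod n J K t
    omega

theorem pssr_iff_even' (n : ℕ) (hn : 1 ≤ n) (ψ : Idx n → ℂ) (hψ : star ψ ⬝ᵥ ψ = 1) :
    ((∀ J, ψ J ≠ 0 → Even (∑ s, (J s : ℕ))) ∨ (∀ J, ψ J ≠ 0 → Odd (∑ s, (J s : ℕ)))) ↔
      ∀ L : List (Matrix (Idx n) (Idx n) ℂ),
        (∀ M ∈ L, ∃ s : Fin n, M = ann n s ∨ M = adag n s) →
        Odd L.length →
        star ψ ⬝ᵥ (L.prod *ᵥ ψ) = 0 := by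
  constructor
  · -- forward
    intro hp L hmem hlen
    obtain ⟨p, hp⟩ : ∃ p, ∀ J, ψ J ≠ 0 → (∑ s, (J s : ℕ)) % 2 = p := by
      rcases hp with hp | hp
      · exact ⟨0, fun J hJ => Nat.even_iff.mp (hp J hJ)⟩
      · exact ⟨1, fun J hJ => Nat.odd_iff.mp (hp J hJ)⟩
    have hlen' : L.length % 2 = 1 := Nat.odd_iff.mp hlen
    simp only [dotProduct, mulVec, Pi.star_apply]
    apply Finset.sum_eq_zero
    intro a _
    by_cases ha : ψ a = 0
    · simp [ha]
    · rw [Finset.sum_eq_zero, mul_zero]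
      intro b _
      by_cases hb : ψ b = 0
      · simp [hb]
      · by_cases hab : L.prod a b = 0
        · simp [hab]
        · exfalso
          have := prod_parity n L hmem a b hab
          have h1 := hp a ha
          have h2 := hp b hb
          omega
  · -- backward
    intro h
    by_contra hP
    push_neg at hP
    obtain ⟨⟨J, hJψ, hJodd⟩, ⟨K, hKψ, hKeven⟩⟩ := hP
    rw [Nat.not_even_iff_odd] at hJodd
    rw [Nat.not_odd_iff_even] at hKeven
    set L : List (Matrix (Idx n) (Idx n) ℂ) := (List.finRange n).flatMap (jwFactor n J K) with hLdef
    have hmem : ∀ M ∈ L, ∃ s : Fin n, M = ann n s ∨ M = adag n s := by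
      intro M hM
      rw [hLdef, List.mem_flatMap] at hM
      obtain ⟨t, _, hM⟩ := hM
      exact factor_mem n J K t M hM
    have hlen : Odd L.length := by
      rw [Nat.odd_iff, hLdef, flatMap_length_mod n J K]
      have : ((List.finRange n).map (fun t => (J t : ℕ) + (K t : ℕ))).sum
          = ∑ t, ((J t : ℕ) + (K t : ℕ)) := by
        rw [← List.ofFn_eq_map, List.sum_ofFn]
      rw [this, Finset.sum_add_distrib]
      have h1 := Nat.odd_iff.mp hJodd
      have h2 := Nat.even_iff.mp hKeven
      omega
    have hzero := h L hmem hlen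
    -- compute the expectation explicitly
    obtain ⟨σ, hσ, hcol⟩ := bind_prod_mulVec n J K (List.finRange n)
      (List.nodup_finRange n) K (fun _ _ => rfl)
    have hcolK : L.prod *ᵥ Pi.single K 1 = σ • (Pi.single J 1 : Idx n → ℂ) := by
      have he : (fun s => if s ∈ List.finRange n then J s else K s) = J := by
        funext s
        rw [if_pos (List.mem_finRange s)]
      rw [hLdef, hcol, he]
    have hcol0 : ∀ b : Idx n, b ≠ K → L.prod *ᵥ Pi.single b 1 = 0 := by
      intro b hb
      apply bind_prod_mulVec_zero n J K (List.finRange n) (List.nodup_finRange n)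
      obtain ⟨t, ht⟩ := Function.ne_iff.mp hb
      exact ⟨t, List.mem_finRange t, ht⟩
    -- entries of L.prod
    have hentry : ∀ a b : Idx n, L.prod a b = if a = J ∧ b = K then σ else 0 := by
      intro a b
      by_cases hb : b = K
      · subst hb
        have := congrFun hcolK a
        simp only [mulVec_single_one, col_apply, mul_one] at this
        rw [this]
        simp [Pi.single_apply]
      · have := congrFun (hcol0 b hb) a
        simp only [mulVec_single_one, col_apply, mul_one, Pi.zero_apply] at this
        rw [this, if_neg (by tauto)]
    have : star ψ ⬝ᵥ (L.prod *ᵥ ψ) = star (ψ J) * (σ * ψ K) := by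
      simp only [dotProduct, mulVec, Pi.star_apply]
      have hrow : ∀ a, (∑ b, L.prod a b * ψ b) = if a = J then σ * ψ K else 0 := by
        intro a
        by_cases ha : a = J
        · subst ha
          rw [if_pos rfl]
          rw [Finset.sum_congr rfl (fun b _ => by rw [hentry])]
          simp [Finset.sum_ite_eq', ite_mul]
        · rw [if_neg ha]
          apply Finset.sum_eq_zero
          intro b _
          rw [hentry, if_neg (by tauto), zero_mul]
      rw [Finset.sum_congr rfl (fun a _ => by rw [hrow a])]
      simp [Finset.sum_ite_eq', mul_ite]
    rw [hzero] at this
    exact (mul_ne_zero (star_ne_zero.mpr hJψ) (mul_ne_zero hσ hKψ)) this.symm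

/-- A unit vector `ψ ∈ ℂ^{2^n}` satisfies the parity superselection rule
iff the pure state it generates is even: for every odd-length list of matrices, each factor
being `aₛ` or `aₛ†` for some mode `s`, the expectation `⟨ψ, M ψ⟩` of the product `M` vanishes. -/
theorem pssr_iff_even (n : ℕ) (hn : 1 ≤ n) (ψ : Idx n → ℂ) (hψ : star ψ ⬝ᵥ ψ = 1) :
    PSSR ψ ↔
      ∀ L : List (Matrix (Idx n) (Idx n) ℂ),
        (∀ M ∈ L, ∃ s : Fin n, M = ann n s ∨ M = adag n s) →
        Odd L.length →
        star ψ ⬝ᵥ (L.prod *ᵥ ψ) = 0 := by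
  exact pssr_iff_even' n hn ψ hψ
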